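/- Let g be the 6-dimensional nilpotent Lie algebra determined by a (1,0)-basis ω¹,ω²,ω³ with dω¹ = 0, dω² = ω¹∧conj(ω¹), dω³ = ω¹∧ω² + B·ω¹∧conj(ω²) + c·ω²∧conj(ω¹), B ∈ ℂ, c ≥ 0. Then dim [g,[g,g]] = 1 if c = |B−1| ≠ 0, and dim [g,[g,g]] = 2 if c ≠ |B−1|. -/

import Mathlib

/-- The real-linear map `z ↦ a z + b z̄` on `ℂ`. -/
def auxMap (a b : ℂ) : ℂ →ₗ[ℝ] ℂ where
  toFun z := a * z + b * (starRingEnd ℂ) z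
  map_add' x y := by simp [map_add]; ring
  map_smul' r x := by
    simp [Complex.real_smul, Complex.conj_ofReal]; ring

@[simp] lemma auxMap_apply (a b z : ℂ) :
    auxMap a b z = a * z + b * (starRingEnd ℂ) z := rfl

lemma auxMap_surj {a b : ℂ} (h : ‖a‖ ≠ ‖b‖) :
    Function.Surjective (auxMap a b) := by
  intro w
  have hns : Complex.normSq a - Complex.normSq b ≠ 0 := by
    intro hh
    apply h
    have h2 : Complex.normSq a = Complex.normSq b := by linarith
    rw [Complex.norm_def, Complex.norm_def, h2]
  have hd : ((Complex.normSq a - Complex.normSq b : ℝ) : ℂ) ≠ 0 := by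
    exact_mod_cast hns
  refine ⟨((starRingEnd ℂ) a * w - b * (starRingEnd ℂ) w) /
      ((Complex.normSq a - Complex.normSq b : ℝ) : ℂ), ?_⟩
  rw [auxMap_apply]
  rw [map_div₀]
  simp only [map_sub, map_mul, Complex.conj_conj, Complex.conj_ofReal]
  rw [mul_div_assoc', mul_div_assoc', ← add_div, div_eq_iff hd]
  push_cast
  linear_combination w * Complex.mul_conj a - w * Complex.mul_conj b

lemma finrank_range_auxMap_two {a b : ℂ} (h : ‖a‖ ≠ ‖b‖) :
    Module.finrank ℝ ↥(LinearMap.range (auxMap a b)) = 2 := by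
  rw [LinearMap.range_eq_top.mpr (auxMap_surj h)]
  simpa using Complex.finrank_real_complex

lemma finrank_range_auxMap_one {a b : ℂ} (hab : ‖a‖ = ‖b‖)
    (ha : a ≠ 0) :
    Module.finrank ℝ ↥(LinearMap.range (auxMap a b)) = 1 := by
  have h2 : a * (starRingEnd ℂ) a = b * (starRingEnd ℂ) b := by
    rw [Complex.mul_conj, Complex.mul_conj, Complex.normSq_eq_norm_sq,
      Complex.normSq_eq_norm_sq, hab]
  obtain ⟨w₀, hw₀⟩ : ∃ w₀, auxMap a b w₀ ≠ 0 := by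
    by_contra hcon
    push_neg at hcon
    have c1 := hcon 1
    have c2 := hcon Complex.I
    rw [auxMap_apply, map_one] at c1
    rw [auxMap_apply, Complex.conj_I] at c2
    exact ha (by linear_combination (1/2 : ℂ) * c1 - (Complex.I/2) * c2 + ((a - b)/2) * Complex.I_sq)
  have key : ∀ z, ∃ r : ℝ, auxMap a b z = r • auxMap a b w₀ := by
    intro z
    set u := auxMap a b z with hu
    set v := auxMap a b w₀ with hv
    have hk : (starRingEnd ℂ) (u * (starRingEnd ℂ) v) = u * (starRingEnd ℂ) v := by
      rw [hu, hv]
      simp only [auxMap_apply, map_add, map_mul, Complex.conj_conj]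
      linear_combination ((starRingEnd ℂ) z * w₀ - z * (starRingEnd ℂ) w₀) * h2
    have hkre : ((u * (starRingEnd ℂ) v).re : ℂ) = u * (starRingEnd ℂ) v :=
      Complex.conj_eq_iff_re.mp hk
    have hnsv : (Complex.normSq v : ℂ) ≠ 0 := by
      exact_mod_cast fun hh => hw₀ (Complex.normSq_eq_zero.mp hh)
    refine ⟨(u * (starRingEnd ℂ) v).re / Complex.normSq v, ?_⟩
    rw [Complex.real_smul]
    push_cast
    rw [hkre, div_mul_eq_mul_div, eq_div_iff hnsv]
    linear_combination (-u) * Complex.mul_conj v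
  have hrange : LinearMap.range (auxMap a b) = Submodule.span ℝ {auxMap a b w₀} := by
    apply le_antisymm
    · rintro x ⟨z, rfl⟩
      obtain ⟨r, hr⟩ := key z
      rw [hr]
      exact Submodule.smul_mem _ _ (Submodule.mem_span_singleton_self _)
    · rw [Submodule.span_le, Set.singleton_subset_iff]
      exact ⟨w₀, rfl⟩
  rw [hrange, finrank_span_singleton hw₀]

/-- Lemma 2.17: for the Lie algebra with complex structure equations
`dω¹ = 0`, `dω² = ω¹∧ω̄¹`, `dω³ = ω¹∧ω² + B ω¹∧ω̄² + c ω²∧ω̄¹`, the second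
commutator `g² = [g,[g,g]]` has dimension `1` if `c = |B-1| ≠ 0` and
dimension `2` if `c ≠ |B-1|`. -/
theorem stmt6 (g : Type) [LieRing g] [LieAlgebra ℝ g]
    (J : g →ₗ[ℝ] g) (hJ : ∀ X, J (J X) = -X)
    (ω₁ ω₂ ω₃ : g →ₗ[ℝ] ℂ)
    (h1 : ∀ X, ω₁ (J X) = Complex.I * ω₁ X)
    (h2 : ∀ X, ω₂ (J X) = Complex.I * ω₂ X)
    (h3 : ∀ X, ω₃ (J X) = Complex.I * ω₃ X)
    (hcoord : Function.Bijective (fun X : g => (ω₁ X, ω₂ X, ω₃ X)))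
    (B : ℂ) (c : ℝ) (hc : 0 ≤ c)
    (hd1 : ∀ X Y : g, ω₁ ⁅X, Y⁆ = 0)
    (hd2 : ∀ X Y : g, -ω₂ ⁅X, Y⁆ =
      ω₁ X * (starRingEnd ℂ) (ω₁ Y) - ω₁ Y * (starRingEnd ℂ) (ω₁ X))
    (hd3 : ∀ X Y : g, -ω₃ ⁅X, Y⁆ =
      (ω₁ X * ω₂ Y - ω₁ Y * ω₂ X)
        + B * (ω₁ X * (starRingEnd ℂ) (ω₂ Y) - ω₁ Y * (starRingEnd ℂ) (ω₂ X))
        + (c : ℂ) * (ω₂ X * (starRingEnd ℂ) (ω₁ Y) - ω₂ Y * (starRingEnd ℂ) (ω₁ X))) :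
    (c = ‖B - 1‖ ∧ c ≠ 0 →
      Module.finrank ℝ ↥(LieModule.lowerCentralSeries ℝ g g 2) = 1) ∧
    (c ≠ ‖B - 1‖ →
      Module.finrank ℝ ↥(LieModule.lowerCentralSeries ℝ g g 2) = 2) := by
  classical
  have hinj : ∀ X Y : g, ω₁ X = ω₁ Y → ω₂ X = ω₂ Y → ω₃ X = ω₃ Y → X = Y := by
    intro X Y e1 e2 e3
    exact hcoord.injective (by simp only [e1, e2, e3])
  have hsurj : ∀ p q r : ℂ, ∃ X : g, ω₁ X = p ∧ ω₂ X = q ∧ ω₃ X = r := by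
    intro p q r
    obtain ⟨X, hX⟩ := hcoord.surjective (p, q, r)
    exact ⟨X, congrArg (fun t => t.1) hX, congrArg (fun t => t.2.1) hX,
      congrArg (fun t => t.2.2) hX⟩
  set a : ℂ := Complex.I * (1 - B) with ha_def
  set b : ℂ := -(Complex.I * (c : ℂ)) with hb_def
  set V : Submodule ℝ ℂ := LinearMap.range (auxMap a b) with hV_def
  -- the distinguished element of the first commutator
  obtain ⟨P, hP1, hP2, hP3⟩ := hsurj 1 0 0
  obtain ⟨Q, hQ1, hQ2, hQ3⟩ := hsurj Complex.I 0 0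
  set Y := ⁅P, Q⁆ with hY_def
  have hY1 : ω₁ Y = 0 := hd1 P Q
  have hY2 : ω₂ Y = 2 * Complex.I := by
    have h := hd2 P Q
    rw [hP1, hQ1, Complex.conj_I, map_one] at h
    linear_combination (-1 : ℂ) * h
  have hYmem : Y ∈ LieModule.lowerCentralSeries ℝ g g 1 := by
    have : LieModule.lowerCentralSeries ℝ g g 1 =
        ⁅(⊤ : LieIdeal ℝ g), (⊤ : LieSubmodule ℝ g g)⁆ := by
      rw [LieModule.lowerCentralSeries_succ, LieModule.lowerCentralSeries_zero]
    rw [this]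
    exact LieSubmodule.lie_mem_lie (LieSubmodule.mem_top P) (LieSubmodule.mem_top Q)
  -- upper bound for the first commutator
  have hlcs1 : ∀ X ∈ LieModule.lowerCentralSeries ℝ g g 1,
      ω₁ X = 0 ∧ (ω₂ X).re = 0 := by
    have hrw : LieModule.lowerCentralSeries ℝ g g 1 =
        ⁅(⊤ : LieIdeal ℝ g), (⊤ : LieSubmodule ℝ g g)⁆ := by
      rw [LieModule.lowerCentralSeries_succ, LieModule.lowerCentralSeries_zero]
    intro X hX
    rw [hrw, ← LieSubmodule.mem_toSubmodule,
      LieSubmodule.lieIdeal_oper_eq_linear_span'] at hX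
    have hXW : X ∈ LinearMap.ker ω₁ ⊓ LinearMap.ker (Complex.reLm ∘ₗ ω₂) := by
      refine Submodule.span_le.mpr ?_ hX
      rintro m ⟨x, -, y, -, rfl⟩
      refine Submodule.mem_inf.mpr ⟨LinearMap.mem_ker.mpr (hd1 x y), ?_⟩
      rw [LinearMap.mem_ker]
      have h := hd2 x y
      have h' := congrArg Complex.re h
      simp only [Complex.neg_re, Complex.sub_re, Complex.mul_re, Complex.conj_re,
        Complex.conj_im] at h'
      simp only [LinearMap.comp_apply, Complex.reLm_coe]
      linarith
    obtain ⟨hk1, hk2⟩ := Submodule.mem_inf.mp hXW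
    exact ⟨LinearMap.mem_ker.mp hk1, by
      have := LinearMap.mem_ker.mp hk2
      simpa using this⟩
  -- upper bound for the second commutator
  have hlcs2 : ∀ X ∈ LieModule.lowerCentralSeries ℝ g g 2,
      ω₁ X = 0 ∧ ω₂ X = 0 ∧ ω₃ X ∈ V := by
    intro X hX
    rw [LieModule.lowerCentralSeries_succ, ← LieSubmodule.mem_toSubmodule,
      LieSubmodule.lieIdeal_oper_eq_linear_span'] at hX
    have hXU : X ∈ LinearMap.ker ω₁ ⊓ (LinearMap.ker ω₂ ⊓ Submodule.comap ω₃ V) := by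
      refine Submodule.span_le.mpr ?_ hX
      rintro m ⟨x, -, y, hy, rfl⟩
      obtain ⟨hy1, hy2⟩ := hlcs1 y hy
      have hω2 : ω₂ ⁅x, y⁆ = 0 := by
        have h := hd2 x y
        rw [hy1, map_zero] at h
        linear_combination (-1 : ℂ) * h
      refine Submodule.mem_inf.mpr ⟨LinearMap.mem_ker.mpr (hd1 x y),
        Submodule.mem_inf.mpr ⟨LinearMap.mem_ker.mpr hω2, ?_⟩⟩
      rw [Submodule.mem_comap]
      have hconj : (starRingEnd ℂ) (ω₂ y) = -(ω₂ y) := by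
        apply Complex.ext <;> simp [hy2]
      have hqy : ω₂ y = ((((ω₂ y).im : ℝ)) : ℂ) * Complex.I := by
        apply Complex.ext <;> simp [hy2]
      have h3 := hd3 x y
      rw [hy1, map_zero, hconj, hqy] at h3
      refine ⟨(-(((ω₂ y).im : ℝ)) : ℂ) * ω₁ x, ?_⟩
      rw [auxMap_apply]
      simp only [map_mul, map_neg, Complex.conj_ofReal]
      linear_combination h3
    obtain ⟨hk1, hk2⟩ := Submodule.mem_inf.mp hXU
    obtain ⟨hk2a, hk2b⟩ := Submodule.mem_inf.mp hk2
    exact ⟨LinearMap.mem_ker.mp hk1, LinearMap.mem_ker.mp hk2a,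
      Submodule.mem_comap.mp hk2b⟩
  -- lower bound: every element of V is realised
  have hlow : ∀ v ∈ V, ∃ X, X ∈ LieModule.lowerCentralSeries ℝ g g 2 ∧
      ω₁ X = 0 ∧ ω₂ X = 0 ∧ ω₃ X = v := by
    rintro v ⟨z, rfl⟩
    obtain ⟨R, hR1, hR2, hR3⟩ := hsurj (-(z / 2)) 0 0
    refine ⟨⁅R, Y⁆, ?_, hd1 R Y, ?_, ?_⟩
    · rw [LieModule.lowerCentralSeries_succ]
      exact LieSubmodule.lie_mem_lie (LieSubmodule.mem_top R) hYmem
    · have h := hd2 R Y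
      rw [hY1, map_zero] at h
      linear_combination (-1 : ℂ) * h
    · have h := hd3 R Y
      rw [hR1, hR2, hY1, hY2, map_zero] at h
      simp only [map_mul, map_neg, map_div₀, map_ofNat, Complex.conj_I] at h
      rw [auxMap_apply]
      linear_combination (-1 : ℂ) * h
  -- transfer the rank computation
  have hfr : Module.finrank ℝ ↥(LieModule.lowerCentralSeries ℝ g g 2) =
      Module.finrank ℝ ↥V := by
    set N := LieModule.lowerCentralSeries ℝ g g 2 with hN_def
    let f : ↥N →ₗ[ℝ] ℂ :=
      { toFun := fun x => ω₃ x.1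
        map_add' := fun x y => by simp
        map_smul' := fun r x => by simp }
    have hfi : Function.Injective f := by
      rintro ⟨x, hx⟩ ⟨y, hy⟩ hxy
      obtain ⟨hx1, hx2, -⟩ := hlcs2 x hx
      obtain ⟨hy1, hy2, -⟩ := hlcs2 y hy
      exact Subtype.ext (hinj x y (by rw [hx1, hy1]) (by rw [hx2, hy2]) hxy)
    have hfrange : LinearMap.range f = V := by
      apply le_antisymm
      · rintro w ⟨⟨x, hx⟩, rfl⟩
        exact (hlcs2 x hx).2.2
      · rintro w hw
        obtain ⟨X, hXm, -, -, hX3⟩ := hlow w hw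
        exact ⟨⟨X, hXm⟩, hX3⟩
    calc Module.finrank ℝ ↥N = Module.finrank ℝ ↥(LinearMap.range f) :=
          (LinearEquiv.ofInjective f hfi).finrank_eq
      _ = Module.finrank ℝ ↥V := by rw [hfrange]
  have habsa : ‖a‖ = ‖B - 1‖ := by
    rw [ha_def, norm_mul, Complex.norm_I, one_mul, show (1 - B) = -(B - 1) by ring,
      norm_neg]
  have habsb : ‖b‖ = c := by
    rw [hb_def, norm_neg, norm_mul, Complex.norm_I, one_mul,
      Complex.norm_of_nonneg hc]
  constructor
  · rintro ⟨hceq, hc0⟩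
    rw [hfr, hV_def]
    apply finrank_range_auxMap_one
    · rw [habsa, habsb, hceq]
    · intro h0
      rw [h0, norm_zero] at habsa
      exact hc0 (by rw [hceq, ← habsa])
  · intro hne
    rw [hfr, hV_def]
    apply finrank_range_auxMap_two
    rw [habsa, habsb]
    exact fun h => hne h.symm
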